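/- For a unimodal map, the difference of two consecutive cutting times is again a cutting time; that is, there is a function Q: ℕ → ℕ ∪ {0} with Q(k) < k such that S_k = S_{k−1} + S_{Q(k)} for all k ≥ 1. -/

import Mathlib

/-- `T` is a unimodal map of `[0,1]` with turning point `c`. -/
structure Unimodal (T : ℝ → ℝ) (c : ℝ) : Prop where
  cont : ContinuousOn T (Set.Icc 0 1)
  maps : Set.MapsTo T (Set.Icc 0 1) (Set.Icc 0 1)
  hc : c ∈ Set.Ioo (0 : ℝ) 1
  mono : StrictMonoOn T (Set.Icc 0 c)
  anti : StrictAntiOn T (Set.Icc c 1)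

/-- The left endpoint of the domain of the left central branch of `T^n`:
the infimum of the `x ∈ [0,c]` such that `T^n` is injective (monotone) on `[x,c]`. -/
noncomputable def leftEnd (T : ℝ → ℝ) (c : ℝ) (n : ℕ) : ℝ :=
  sInf {x : ℝ | 0 ≤ x ∧ Set.InjOn (T^[n]) (Set.Icc x c)}

/-- `D_n`, the common image of the two central branches of `T^n`. -/
noncomputable def level (T : ℝ → ℝ) (c : ℝ) (n : ℕ) : Set ℝ :=
  T^[n] '' Set.Icc (leftEnd T c n) c

/-- `n` is a cutting time iff `c ∈ D_n`. -/
def CuttingTime (T : ℝ → ℝ) (c : ℝ) (n : ℕ) : Prop := c ∈ level T c n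

namespace KneadAux

open Set Filter Topology

/-- The defining set for `leftEnd`. -/
def M (T : ℝ → ℝ) (c : ℝ) (n : ℕ) : Set ℝ :=
  {x : ℝ | 0 ≤ x ∧ Set.InjOn (T^[n]) (Set.Icc x c)}

lemma leftEnd_eq (T : ℝ → ℝ) (c : ℝ) (n : ℕ) : leftEnd T c n = sInf (M T c n) := rfl

variable {T : ℝ → ℝ} {c : ℝ}

/-- inner injectivity from injectivity of a composition -/
lemma injOn_left {f g : ℝ → ℝ} {s : Set ℝ} (h : Set.InjOn (g ∘ f) s) : Set.InjOn f s :=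
  fun a ha b hb he => h ha hb (by simp [Function.comp_apply, he])

/-- outer injectivity (on the image) from injectivity of a composition -/
lemma injOn_right {f g : ℝ → ℝ} {s : Set ℝ} (h : Set.InjOn (g ∘ f) s) :
    Set.InjOn g (f '' s) := by
  rintro _ ⟨a, ha, rfl⟩ _ ⟨b, hb, rfl⟩ he
  exact congrArg f (h ha hb he)

/-- Image of a compact interval under a continuous injective map. -/
lemma imageIcc {f : ℝ → ℝ} {u v : ℝ} (huv : u ≤ v) (hcont : ContinuousOn f (Set.Icc u v))
    (hinj : Set.InjOn f (Set.Icc u v)) :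
    f '' Set.Icc u v = Set.Icc (min (f u) (f v)) (max (f u) (f v)) := by
  rcases ContinuousOn.strictMonoOn_of_injOn_Icc' huv hcont hinj with hm | hm
  · have h1 : f u ≤ f v := hm.monotoneOn (Set.left_mem_Icc.2 huv) (Set.right_mem_Icc.2 huv) huv
    rw [min_eq_left h1, max_eq_right h1]
    refine Set.Subset.antisymm ?_ (intermediate_value_Icc huv hcont)
    rintro y ⟨x, hx, rfl⟩
    exact ⟨hm.monotoneOn (Set.left_mem_Icc.2 huv) hx hx.1,
      hm.monotoneOn hx (Set.right_mem_Icc.2 huv) hx.2⟩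
  · have h1 : f v ≤ f u := hm.antitoneOn (Set.left_mem_Icc.2 huv) (Set.right_mem_Icc.2 huv) huv
    rw [min_eq_right h1, max_eq_left h1]
    refine Set.Subset.antisymm ?_ (intermediate_value_Icc' huv hcont)
    rintro y ⟨x, hx, rfl⟩
    exact ⟨hm.antitoneOn hx (Set.right_mem_Icc.2 huv) hx.2,
      hm.antitoneOn (Set.left_mem_Icc.2 huv) hx hx.1⟩

section Basic

variable (hT : Unimodal T c)
include hT

lemma c_mem01 : c ∈ Set.Icc (0 : ℝ) 1 := ⟨hT.hc.1.le, hT.hc.2.le⟩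

lemma iter_maps (n : ℕ) : Set.MapsTo (T^[n]) (Set.Icc (0:ℝ) 1) (Set.Icc (0:ℝ) 1) :=
  hT.maps.iterate n

lemma iter_cont (n : ℕ) : ContinuousOn (T^[n]) (Set.Icc (0:ℝ) 1) := by
  induction n with
  | zero => simpa using continuousOn_id
  | succ n ih =>
    rw [Function.iterate_succ']
    exact hT.cont.comp ih (iter_maps hT n)

lemma c_mem_M (n : ℕ) : c ∈ M T c n := by
  refine ⟨hT.hc.1.le, ?_⟩
  rw [Set.Icc_self]
  exact Set.injOn_singleton _ _

lemma M_bdd (n : ℕ) : BddBelow (M T c n) := ⟨0, fun x hx => hx.1⟩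

lemma M_ne (n : ℕ) : (M T c n).Nonempty := ⟨c, c_mem_M hT n⟩

lemma z_nonneg (n : ℕ) : 0 ≤ leftEnd T c n :=
  le_csInf (M_ne hT n) fun x hx => hx.1

lemma z_le_c (n : ℕ) : leftEnd T c n ≤ c := csInf_le (M_bdd hT n) (c_mem_M hT n)

lemma M_succ_subset (n : ℕ) : M T c (n + 1) ⊆ M T c n := by
  rintro x ⟨hx0, hinj⟩
  rw [Function.iterate_succ'] at hinj
  exact ⟨hx0, injOn_left hinj⟩

lemma z_mono (n : ℕ) : leftEnd T c n ≤ leftEnd T c (n + 1) :=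
  csInf_le_csInf (M_bdd hT n) (M_ne hT (n + 1)) (M_succ_subset hT n)

end Basic

/-- Auxiliary contradiction lemma used in `z_mem`. -/
lemma no_eq_aux {g : ℝ → ℝ} {z b cc : ℝ} (hg : ContinuousOn g (Set.Icc 0 1))
    (hz : 0 ≤ z) (hzb : z < b) (hbc : b ≤ cc) (hc1 : cc ≤ 1)
    (hinj : ∀ x, z < x → Set.InjOn g (Set.Icc x cc)) (heq : g z = g b)
    {x1 : ℝ} (hx1 : x1 ∈ Set.Ioo z b) (hgt : g z < g x1) : False := by
  set u := (g z + g x1) / 2 with hu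
  have hu1 : g z < u := by simp only [hu]; linarith
  have hu2 : u < g x1 := by simp only [hu]; linarith
  -- find x0 ∈ (z, x1) with g x0 < u
  have hzmem : z ∈ Set.Icc (0:ℝ) 1 := ⟨hz, by linarith [hx1.2]⟩
  have hsub : Set.Ioo z x1 ⊆ Set.Icc (0:ℝ) 1 := fun x hx =>
    ⟨by linarith [hx.1], by linarith [hx.2, hx1.2]⟩
  have htend : Filter.Tendsto g (nhdsWithin z (Set.Ioo z x1)) (nhds (g z)) :=
    (hg z hzmem).tendsto.mono_left (nhdsWithin_mono _ hsub)
  have hne : (nhdsWithin z (Set.Ioo z x1)).NeBot := by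
    rw [nhdsWithin_Ioo_eq_nhdsGT hx1.1]
    infer_instance
  have hev : ∀ᶠ x in nhdsWithin z (Set.Ioo z x1), g x < u :=
    htend (Iio_mem_nhds hu1)
  obtain ⟨x0, hx0lt, hx0z, hx0x1⟩ :=
    (hev.and (eventually_mem_nhdsWithin)).exists
  -- IVT on [x0, x1] and on [x1, b] gives two distinct points with value u
  have hsub1 : Set.Icc x0 x1 ⊆ Set.Icc (0:ℝ) 1 := fun x hx =>
    ⟨by linarith [hx.1], by linarith [hx.2, hx1.2]⟩
  have hsub2 : Set.Icc x1 b ⊆ Set.Icc (0:ℝ) 1 := fun x hx =>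
    ⟨by linarith [hx.1, hx1.1], by linarith [hx.2]⟩
  obtain ⟨y1, hy1, hgy1⟩ := intermediate_value_Icc hx0x1.le (hg.mono hsub1)
    (⟨hx0lt.le, hu2.le⟩ : u ∈ Set.Icc (g x0) (g x1))
  obtain ⟨y2, hy2, hgy2⟩ := intermediate_value_Icc' hx1.2.le (hg.mono hsub2)
    (⟨by rw [← heq]; exact hu1.le, hu2.le⟩ : u ∈ Set.Icc (g b) (g x1))
  have hy1m : y1 ∈ Set.Icc x0 cc := ⟨hy1.1, by linarith [hy1.2, hx1.2]⟩
  have hy2m : y2 ∈ Set.Icc x0 cc := ⟨by linarith [hy2.1, hx0x1], by linarith [hy2.2]⟩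
  have : y1 = y2 := hinj x0 hx0z hy1m hy2m (hgy1.trans hgy2.symm)
  have hx1y : y1 = x1 := le_antisymm hy1.2 (this ▸ hy2.1)
  rw [hx1y] at hgy1
  exact absurd hgy1 (ne_of_lt (by linarith)).symm

/-- The infimum itself belongs to the defining set: `T^[n]` is injective on `[z_n, c]`. -/
lemma z_mem (hT : Unimodal T c) (n : ℕ) : leftEnd T c n ∈ M T c n := by
  set z := leftEnd T c n with hzdef
  have hz0 : 0 ≤ z := z_nonneg hT n
  have hzc : z ≤ c := z_le_c hT n
  have hA : ∀ x, z < x → Set.InjOn (T^[n]) (Set.Icc x c) := by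
    intro x hx
    rcases le_or_gt x c with h | h
    · obtain ⟨y, hy, hyx⟩ := exists_lt_of_csInf_lt (M_ne hT n) hx
      exact hy.2.mono (Set.Icc_subset_Icc_left hyx.le)
    · rw [Set.Icc_eq_empty (not_le.2 h)]
      exact Set.injOn_empty _
  refine ⟨hz0, ?_⟩
  have main : ∀ p q, p ∈ Set.Icc z c → q ∈ Set.Icc z c → p < q →
      T^[n] p = T^[n] q → False := by
    intro p q hp hq hpq he
    rcases lt_or_ge z p with hzp | hpz
    · exact absurd (hA p hzp ⟨le_rfl, hp.2⟩ ⟨hpq.le, hq.2⟩ he) (ne_of_lt hpq)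
    · have hpz' : p = z := le_antisymm hpz hp.1
      subst hpz'
      -- p = z < q, T^[n] z = T^[n] q
      set x1 := (z + q) / 2 with hx1def
      have hx1 : x1 ∈ Set.Ioo z q := ⟨by simp only [hx1def]; linarith, by simp only [hx1def]; linarith⟩
      have hgx1 : T^[n] x1 ≠ T^[n] z := by
        intro hbad
        have := hA x1 hx1.1 ⟨le_rfl, by linarith [hx1.2, hq.2]⟩ ⟨hx1.2.le, hq.2⟩
          (hbad.trans he)
        exact absurd this (ne_of_lt hx1.2)
      rcases hgx1.lt_or_gt with hlt | hgt
      · -- apply aux to -T^[n]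
        refine no_eq_aux (g := fun x => -(T^[n] x)) ((iter_cont hT n).neg) hz0 hpq hq.2
          hT.hc.2.le (fun x hx => ?_) (by simp [he]) hx1 (by simpa using hlt)
        have := hA x hx
        exact fun a ha b hb hab => this ha hb (by simpa using hab)
      · exact no_eq_aux (iter_cont hT n) hz0 hpq hq.2 hT.hc.2.le
          (fun x hx => hA x hx) he hx1 hgt
  intro a ha b hb he
  by_contra hne
  rcases Ne.lt_or_gt hne with h | h
  · exact main a b ha hb h he
  · exact main b a hb ha h he.symm

lemma z_inj (hT : Unimodal T c) (n : ℕ) :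
    Set.InjOn (T^[n]) (Set.Icc (leftEnd T c n) c) := (z_mem hT n).2

lemma icc_sub01 (hT : Unimodal T c) {u : ℝ} (hu : 0 ≤ u) :
    Set.Icc u c ⊆ Set.Icc (0:ℝ) 1 := fun x hx =>
  ⟨le_trans hu hx.1, le_trans hx.2 hT.hc.2.le⟩

/-- `T` is not injective on any set containing a neighborhood `[c-ε, c+ε]` of `c`. -/
lemma noninj (hT : Unimodal T c) {s : Set ℝ} {ε : ℝ} (hε : 0 < ε)
    (hsub : Set.Icc (c - ε) (c + ε) ⊆ s) (hs1 : s ⊆ Set.Icc 0 1) :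
    ¬ Set.InjOn T s := by
  intro hinjS
  set a := c - ε with ha
  set b := c + ε with hb
  have hab : a ∈ Set.Icc (0:ℝ) 1 := hs1 (hsub ⟨le_rfl, by simp only [ha, hb]; linarith⟩)
  have hbb : b ∈ Set.Icc (0:ℝ) 1 := hs1 (hsub ⟨by simp only [ha, hb]; linarith, le_rfl⟩)
  have hac : a < c := by simp only [ha]; linarith
  have hcb : c < b := by simp only [hb]; linarith
  have hTa : T a < T c := hT.mono ⟨hab.1, hac.le⟩ ⟨hT.hc.1.le, le_rfl⟩ hac
  have hTb : T b < T c := hT.anti ⟨le_rfl, hT.hc.2.le⟩ ⟨hcb.le, hbb.2⟩ hcb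
  rcases le_total (T a) (T b) with h | h
  · obtain ⟨y, hy, hTy⟩ := intermediate_value_Icc hac.le
      (hT.cont.mono (fun x hx => ⟨le_trans hab.1 hx.1, le_trans hx.2 hT.hc.2.le⟩))
      (⟨h, hTb.le⟩ : T b ∈ Set.Icc (T a) (T c))
    have hyb : y ≠ b := ne_of_lt (lt_of_le_of_lt hy.2 hcb)
    exact hyb (hinjS (hsub ⟨hy.1, by linarith [hy.2, hcb.le]⟩) (hsub ⟨hac.le.trans hcb.le |>.trans (le_refl b) |> fun _ => by simp only [ha, hb]; linarith, le_rfl⟩) hTy)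
  · obtain ⟨y, hy, hTy⟩ := intermediate_value_Icc' hcb.le
      (hT.cont.mono (fun x hx => ⟨le_trans hT.hc.1.le hx.1, le_trans hx.2 hbb.2⟩))
      (⟨h, hTa.le⟩ : T a ∈ Set.Icc (T b) (T c))
    have hya : y ≠ a := ne_of_gt (lt_of_lt_of_le hac hy.1)
    exact hya (hinjS (hsub ⟨by linarith [hy.1, hac.le], hy.2⟩) (hsub ⟨le_rfl, by simp only [ha, hb]; linarith⟩) hTy)

/-- At a non-cutting time the left endpoint is unchanged and `D_{n+1} = T(D_n)`. -/
lemma step_noncut (hT : Unimodal T c) (n : ℕ) (h : c ∉ level T c n) :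
    leftEnd T c (n + 1) = leftEnd T c n ∧ level T c (n + 1) = T '' level T c n := by
  set z := leftEnd T c n with hzdef
  have hz0 : 0 ≤ z := z_nonneg hT n
  have hzc : z ≤ c := z_le_c hT n
  have hinj := z_inj hT n
  have hcont : ContinuousOn (T^[n]) (Set.Icc z c) := (iter_cont hT n).mono (icc_sub01 hT hz0)
  have himg : level T c n = Set.Icc (min (T^[n] z) (T^[n] c)) (max (T^[n] z) (T^[n] c)) :=
    imageIcc hzc hcont hinj
  have hD1 : level T c n ⊆ Set.Icc (0:ℝ) 1 := by
    rintro _ ⟨x, hx, rfl⟩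
    exact iter_maps hT n (icc_sub01 hT hz0 hx)
  have hTinj : Set.InjOn T (level T c n) := by
    rw [himg] at h ⊢
    rcases le_or_gt (min (T^[n] z) (T^[n] c)) c with hmc | hmc
    · have hMc : max (T^[n] z) (T^[n] c) < c := by
        by_contra hcon
        push_neg at hcon
        exact h ⟨hmc, hcon⟩
      refine (hT.mono.injOn).mono fun x hx => ?_
      have := hD1 (himg ▸ (hx : x ∈ Set.Icc _ _))
      exact ⟨this.1, le_trans hx.2 hMc.le⟩
    · refine (hT.anti.injOn).mono fun x hx => ?_
      have := hD1 (himg ▸ (hx : x ∈ Set.Icc _ _))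
      exact ⟨le_trans hmc.le hx.1, this.2⟩
  have hinj1 : Set.InjOn (T^[n + 1]) (Set.Icc z c) := by
    rw [Function.iterate_succ']
    exact hTinj.comp hinj (Set.mapsTo_image _ _)
  have hle : leftEnd T c (n + 1) ≤ z := csInf_le (M_bdd hT (n + 1)) ⟨hz0, hinj1⟩
  have heq : leftEnd T c (n + 1) = z := le_antisymm hle (z_mono hT n)
  refine ⟨heq, ?_⟩
  show T^[n + 1] '' Set.Icc (leftEnd T c (n + 1)) c = _
  rw [heq, Function.iterate_succ', Set.image_comp]
  rfl

/-- At a cutting time `m`, `c` is still in the image of `[z_{m+1}, c]` under `T^[m]`. -/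
lemma p_ge (hT : Unimodal T c) (m : ℕ) (h : c ∈ level T c m) :
    c ∈ T^[m] '' Set.Icc (leftEnd T c (m + 1)) c := by
  obtain ⟨p, hp, hpc⟩ := h
  suffices hzp : leftEnd T c (m + 1) ≤ p from ⟨p, ⟨hzp, hp.2⟩, hpc⟩
  have hp0 : 0 ≤ p := le_trans (z_nonneg hT m) hp.1
  have hpinj : Set.InjOn (T^[m]) (Set.Icc p c) :=
    (z_inj hT m).mono (Set.Icc_subset_Icc_left hp.1)
  have hcont : ContinuousOn (T^[m]) (Set.Icc p c) := (iter_cont hT m).mono (icc_sub01 hT hp0)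
  have himg : T^[m] '' Set.Icc p c
      = Set.Icc (min c (T^[m] c)) (max c (T^[m] c)) := by
    rw [imageIcc hp.2 hcont hpinj, hpc]
  have hsub01 : Set.Icc (min c (T^[m] c)) (max c (T^[m] c)) ⊆ Set.Icc (0:ℝ) 1 := by
    rw [← himg]
    rintro _ ⟨x, hx, rfl⟩
    exact iter_maps hT m (icc_sub01 hT hp0 hx)
  have hTmc01 : T^[m] c ∈ Set.Icc (0:ℝ) 1 := by
    rw [← himg] at hsub01
    exact iter_maps hT m (c_mem01 hT)
  have hTinj : Set.InjOn T (Set.Icc (min c (T^[m] c)) (max c (T^[m] c))) := by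
    rcases le_total (T^[m] c) c with hle | hle
    · rw [min_eq_right hle, max_eq_left hle]
      exact (hT.mono.injOn).mono (Set.Icc_subset_Icc_left hTmc01.1)
    · rw [min_eq_left hle, max_eq_right hle]
      exact (hT.anti.injOn).mono (Set.Icc_subset_Icc_right hTmc01.2)
  have hinj1 : Set.InjOn (T^[m + 1]) (Set.Icc p c) := by
    rw [Function.iterate_succ']
    refine hTinj.comp hpinj ?_
    rw [← himg]
    exact Set.mapsTo_image _ _
  exact csInf_le (M_bdd hT (m + 1)) ⟨hp0, hinj1⟩

/-- Hofbauer's lemma: if `m` and `m+s` are consecutive cutting times, then `s` is a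
cutting time. -/
lemma main_step (hT : Unimodal T c) {m s : ℕ} (hs : 1 ≤ s) (hc1 : c ∈ level T c 1)
    (hcm : c ∈ level T c m) (hcn : c ∈ level T c (m + s))
    (hno : ∀ j, m < j → j < m + s → c ∉ level T c j) : c ∈ level T c s := by
  obtain ⟨t, rfl⟩ : ∃ t, s = t + 1 := ⟨s - 1, by omega⟩
  rcases Nat.eq_zero_or_pos t with rfl | ht1
  · exact hc1
  set z' := leftEnd T c (m + 1) with hz'def
  have hz'0 : 0 ≤ z' := z_nonneg hT (m + 1)
  have hz'c : z' ≤ c := z_le_c hT (m + 1)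
  set L := T^[m] '' Set.Icc z' c with hLdef
  have hstep : ∀ j, 1 ≤ j → j ≤ t + 1 →
      leftEnd T c (m + j) = z' ∧ level T c (m + j) = T^[j] '' L := by
    intro j
    induction j with
    | zero => omega
    | succ j ih =>
      intro _ hjs
      rcases Nat.eq_zero_or_pos j with rfl | hj
      · refine ⟨rfl, ?_⟩
        show T^[m + 1] '' Set.Icc z' c = T^[1] '' L
        rw [hLdef, ← Set.image_comp, ← Function.iterate_add, Nat.add_comm]
      · obtain ⟨hze, hle⟩ := ih hj (by omega)
        have hnc : c ∉ level T c (m + j) := hno (m + j) (by omega) (by omega)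
        obtain ⟨hz2, hl2⟩ := step_noncut hT (m + j) hnc
        refine ⟨?_, ?_⟩
        · rw [show m + (j + 1) = (m + j) + 1 from rfl, hz2, hze]
        · rw [show m + (j + 1) = (m + j) + 1 from rfl, hl2, hle, ← Set.image_comp,
            ← Function.iterate_succ']
  obtain ⟨hzs, hls⟩ := hstep (t + 1) (by omega) le_rfl
  have hcl : c ∈ L := p_ge hT m hcm
  have hinjn : Set.InjOn (T^[t + 1] ∘ T^[m]) (Set.Icc z' c) := by
    have h := z_inj hT (m + (t + 1))
    rw [hzs] at h
    rwa [Nat.add_comm m (t + 1), Function.iterate_add] at h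
  have hinjm : Set.InjOn (T^[m]) (Set.Icc z' c) := injOn_left hinjn
  have hinjs : Set.InjOn (T^[t + 1]) L := injOn_right hinjn
  have hLeq : L = Set.Icc (min (T^[m] z') (T^[m] c)) (max (T^[m] z') (T^[m] c)) :=
    imageIcc hz'c ((iter_cont hT m).mono (icc_sub01 hT hz'0)) hinjm
  have hL01 : L ⊆ Set.Icc (0:ℝ) 1 := by
    rintro _ ⟨x, hx, rfl⟩
    exact iter_maps hT m (icc_sub01 hT hz'0 hx)
  have hcs : c ∈ T^[t + 1] '' L := by rw [← hls]; exact hcn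
  have hTinjL : Set.InjOn T L := by
    have h := z_inj hT (m + 1)
    rw [Function.iterate_succ'] at h
    rw [← hz'def] at h
    exact injOn_right h
  have hclIcc : c ∈ Set.Icc (min (T^[m] z') (T^[m] c)) (max (T^[m] z') (T^[m] c)) := by
    rw [← hLeq]; exact hcl
  have hend : (∀ x ∈ L, c ≤ x) ∨ (∀ x ∈ L, x ≤ c) := by
    by_contra hcon
    push_neg at hcon
    obtain ⟨⟨x2, hx2L, hx2⟩, x1, hx1L, hx1⟩ := hcon
    have hx2' : x2 ∈ Set.Icc (min (T^[m] z') (T^[m] c)) (max (T^[m] z') (T^[m] c)) := by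
      rw [← hLeq]; exact hx2L
    have hx1' : x1 ∈ Set.Icc (min (T^[m] z') (T^[m] c)) (max (T^[m] z') (T^[m] c)) := by
      rw [← hLeq]; exact hx1L
    set ε := min (c - x2) (x1 - c) with hεdef
    have hε : 0 < ε := lt_min (by linarith) (by linarith)
    have hsubL : Set.Icc (c - ε) (c + ε) ⊆ L := by
      rw [hLeq]
      intro y hy
      have h1 : ε ≤ c - x2 := min_le_left _ _
      have h2 : ε ≤ x1 - c := min_le_right _ _
      exact ⟨by linarith [hx2'.1, hy.1], by linarith [hx1'.2, hy.2]⟩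
    exact noninj hT hε hsubL hL01 hTinjL
  rcases hend with hR | hL2
  · -- case B : L = [c, b]
    have hminc : min (T^[m] z') (T^[m] c) = c := by
      have hmem : min (T^[m] z') (T^[m] c) ∈ L := by
        rw [hLeq]; exact ⟨le_rfl, min_le_max⟩
      exact le_antisymm hclIcc.1 (hR _ hmem)
    set b := max (T^[m] z') (T^[m] c) with hbdef
    have hLIcc : L = Set.Icc c b := by rw [hLeq, hminc]
    have hcb : c ≤ b := by
      rw [hLIcc] at hcl; exact hcl.2
    have hb1 : b ≤ 1 := by
      have : b ∈ L := by rw [hLIcc]; exact Set.right_mem_Icc.2 hcb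
      exact (hL01 this).2
    have hTcont_cb : ContinuousOn T (Set.Icc c b) :=
      hT.cont.mono (Set.Icc_subset_Icc hT.hc.1.le hb1)
    have hTinj_cb : Set.InjOn T (Set.Icc c b) :=
      (hT.anti.injOn).mono (Set.Icc_subset_Icc_right hb1)
    have hTbc : T b ≤ T c := hT.anti.antitoneOn ⟨le_rfl, hT.hc.2.le⟩ ⟨hcb, hb1⟩ hcb
    have hTimg : T '' Set.Icc c b = Set.Icc (T b) (T c) := by
      rw [imageIcc hcb hTcont_cb hTinj_cb, min_eq_right hTbc, max_eq_left hTbc]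
    have hinjt : Set.InjOn (T^[t]) (Set.Icc (T b) (T c)) := by
      have h2 : Set.InjOn (T^[t] ∘ T) (Set.Icc c b) := by
        rw [← Function.iterate_succ, ← hLIcc]
        exact hinjs
      rw [← hTimg]
      exact injOn_right h2
    set zs := leftEnd T c (t + 1) with hzsdef
    have hzs0 : 0 ≤ zs := z_nonneg hT (t + 1)
    have hzsc : zs ≤ c := z_le_c hT (t + 1)
    have hT0c : T 0 ≤ T c :=
      (hT.mono.monotoneOn) ⟨le_rfl, hT.hc.1.le⟩ ⟨hT.hc.1.le, le_rfl⟩ hT.hc.1.le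
    have hTzs_le : T zs ≤ T b := by
      by_contra hgt
      push_neg at hgt
      rcases le_total (T b) (T 0) with h0 | h0
      · -- then `D_{m+1} = T(L) = [T b, T c] ⊇ [T 0, T c] = D_1 ∋ c`, contradicting that
        -- `m + 1` is not a cutting time (using `t ≥ 1`).
        have himg0 : T '' Set.Icc 0 c = Set.Icc (T 0) (T c) := by
          rw [imageIcc hT.hc.1.le (hT.cont.mono (icc_sub01 hT le_rfl)) (hT.mono.injOn),
            min_eq_left hT0c, max_eq_right hT0c]
        have hz1 : leftEnd T c 1 = 0 := by
          refine le_antisymm (csInf_le (M_bdd hT 1) ⟨le_rfl, ?_⟩) (z_nonneg hT 1)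
          rw [Function.iterate_one]
          exact hT.mono.injOn
        have hlev1 : level T c 1 = Set.Icc (T 0) (T c) := by
          show T^[1] '' Set.Icc (leftEnd T c 1) c = _
          rw [hz1, Function.iterate_one, himg0]
        have hc1' : T 0 ≤ c ∧ c ≤ T c := by
          rw [hlev1] at hc1; exact ⟨hc1.1, hc1.2⟩
        obtain ⟨-, hlm1⟩ := hstep 1 le_rfl (by omega)
        have hcm1 : c ∈ level T c (m + 1) := by
          rw [hlm1]
          have : T^[1] '' L = Set.Icc (T b) (T c) := by
            rw [Function.iterate_one, hLIcc, hTimg]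
          rw [this]
          exact ⟨le_trans h0 hc1'.1, hc1'.2⟩
        exact hno (m + 1) (by omega) (by omega) hcm1
      · obtain ⟨x, hx, hTx⟩ := intermediate_value_Icc hzs0
          (hT.cont.mono (fun y hy => ⟨hy.1, le_trans hy.2 (le_trans hzsc hT.hc.2.le)⟩))
          (⟨h0, hgt.le⟩ : T b ∈ Set.Icc (T 0) (T zs))
        have hxzs : x < zs := lt_of_le_of_ne hx.2
          (fun he => by rw [he] at hTx; rw [hTx] at hgt; exact lt_irrefl _ hgt)
        have hxc : x ≤ c := le_trans hx.2 hzsc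
        have hTxc : T x ≤ T c :=
          hT.mono.monotoneOn ⟨hx.1, hxc⟩ ⟨hT.hc.1.le, le_rfl⟩ hxc
        have himgx : T '' Set.Icc x c = Set.Icc (T b) (T c) := by
          rw [imageIcc hxc (hT.cont.mono (icc_sub01 hT hx.1))
            (hT.mono.injOn.mono (Set.Icc_subset_Icc hx.1 le_rfl)),
            min_eq_left hTxc, max_eq_right hTxc, hTx]
        have hinjx : Set.InjOn (T^[t + 1]) (Set.Icc x c) := by
          rw [Function.iterate_succ]
          exact hinjt.comp (hT.mono.injOn.mono (Set.Icc_subset_Icc hx.1 le_rfl))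
            (fun y hy => himgx ▸ Set.mem_image_of_mem T hy)
        have : zs ≤ x := csInf_le (M_bdd hT (t + 1)) ⟨hx.1, hinjx⟩
        linarith
    obtain ⟨y, hyL, hys⟩ := hcs
    have hyIcc : y ∈ Set.Icc c b := by rw [← hLIcc]; exact hyL
    have hTyIcc : T y ∈ Set.Icc (T b) (T c) := by
      rw [← hTimg]; exact Set.mem_image_of_mem T hyIcc
    have himgzs : T '' Set.Icc zs c = Set.Icc (T zs) (T c) := by
      have hTzsc : T zs ≤ T c :=
        hT.mono.monotoneOn ⟨hzs0, hzsc⟩ ⟨hT.hc.1.le, le_rfl⟩ hzsc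
      rw [imageIcc hzsc (hT.cont.mono (icc_sub01 hT hzs0))
        (hT.mono.injOn.mono (Set.Icc_subset_Icc hzs0 le_rfl)),
        min_eq_left hTzsc, max_eq_right hTzsc]
    have hTy2 : T y ∈ T '' Set.Icc zs c := by
      rw [himgzs]; exact ⟨le_trans hTzs_le hTyIcc.1, hTyIcc.2⟩
    obtain ⟨x', hx', hTx'⟩ := hTy2
    show c ∈ T^[t + 1] '' Set.Icc (leftEnd T c (t + 1)) c
    rw [← hzsdef]
    refine ⟨x', hx', ?_⟩
    rw [Function.iterate_succ_apply, hTx', ← Function.iterate_succ_apply]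
    exact hys
  · -- case A : L = [a, c]
    set a := min (T^[m] z') (T^[m] c) with hadef
    have hsup : max (T^[m] z') (T^[m] c) ≤ c := by
      have hmem : max (T^[m] z') (T^[m] c) ∈ L := by
        rw [hLeq]; exact ⟨min_le_max, le_rfl⟩
      exact hL2 _ hmem
    have hmaxc : max (T^[m] z') (T^[m] c) = c := le_antisymm hsup hclIcc.2
    have hLIcc : L = Set.Icc a c := by rw [hLeq, hmaxc]
    have hamem : a ∈ L := by rw [hLIcc]; exact ⟨le_rfl, hclIcc.1⟩
    have ha0 : 0 ≤ a := (hL01 hamem).1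
    have hinjac : Set.InjOn (T^[t + 1]) (Set.Icc a c) := by rw [← hLIcc]; exact hinjs
    have hzs_le : leftEnd T c (t + 1) ≤ a := csInf_le (M_bdd hT (t + 1)) ⟨ha0, hinjac⟩
    show c ∈ T^[t + 1] '' Set.Icc (leftEnd T c (t + 1)) c
    have hsubst : L ⊆ Set.Icc (leftEnd T c (t + 1)) c := by
      rw [hLIcc]; exact Set.Icc_subset_Icc_left hzs_le
    exact Set.image_mono (f := T^[t + 1]) hsubst hcs

end KneadAux

theorem kneading_map_exists (T : ℝ → ℝ) (c : ℝ) (hT : Unimodal T c)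
    (S : ℕ → ℕ) (hmono : StrictMono S) (hS0 : S 0 = 1) (hS1 : S 1 = 2)
    (hcut : ∀ n, 1 ≤ n → (CuttingTime T c n ↔ ∃ k, S k = n)) :
    ∃ Q : ℕ → ℕ, ∀ k, 1 ≤ k → Q k < k ∧ S k = S (k - 1) + S (Q k) := by
  classical
  have key : ∀ k, 1 ≤ k → ∃ j, j < k ∧ S k = S (k - 1) + S j := by
    intro k hk
    set m := S (k - 1) with hm
    set n := S k with hn
    have hm1 : 1 ≤ m := by
      have h := hmono.monotone (Nat.zero_le (k - 1))
      omega
    have hmn : m < n := hmono (by omega)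
    have hcm : CuttingTime T c m := (hcut m hm1).2 ⟨k - 1, rfl⟩
    have hcn : CuttingTime T c n := (hcut n (by omega)).2 ⟨k, rfl⟩
    have hno : ∀ j, m < j → j < n → ¬ CuttingTime T c j := by
      intro j hj1 hj2 hcj
      obtain ⟨i, hi⟩ := (hcut j (by omega)).1 hcj
      have h1 : k - 1 < i := hmono.lt_iff_lt.1 (by rw [hi]; exact hj1)
      have h2 : i < k := hmono.lt_iff_lt.1 (by rw [hi]; exact hj2)
      omega
    have hd : CuttingTime T c (n - m) := by
      have hnm : m + (n - m) = n := by omega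
      have hc1 : CuttingTime T c 1 := (hcut 1 le_rfl).2 ⟨0, hS0⟩
      refine KneadAux.main_step hT (by omega) hc1 hcm ?_ ?_
      · rw [hnm]; exact hcn
      · intro j hj1 hj2
        exact hno j hj1 (by omega)
    obtain ⟨j, hj⟩ := (hcut (n - m) (by omega)).1 hd
    refine ⟨j, ?_, by omega⟩
    exact hmono.lt_iff_lt.1 (by omega)
  refine ⟨fun k => if h : 1 ≤ k then (key k h).choose else 0, fun k hk => ?_⟩
  simp only [dif_pos hk]
  exact ⟨(key k hk).choose_spec.1, (key k hk).choose_spec.2⟩
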